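/- With ρ(X,t) = (4π(K − k(t)))^{-1/2} exp(−|X−X₀|²/(4(K − k(t)))) on ℝ² (d = 1 normalization as in the paper), for every unit vector a ∈ S¹ and every (X,t) with k(t) < K, one has ρ_t + k'(t) (Dρ·a)²/ρ + k'(t) ((I − a⊗a) : D²ρ) = 0. -/

import Mathlib

open RealInnerProductSpace

/-- The spatial Gaussian profile. -/
noncomputable def Fh (X₀ : EuclideanSpace ℝ (Fin 2)) (c : ℝ) :
    EuclideanSpace ℝ (Fin 2) → ℝ :=
  fun Z => (1 / Real.sqrt (4 * Real.pi * c)) * Real.exp (-‖Z - X₀‖ ^ 2 / (4 * c))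

lemma Fh_hasFDerivAt (X₀ : EuclideanSpace ℝ (Fin 2)) (c : ℝ)
    (Y : EuclideanSpace ℝ (Fin 2)) :
    HasFDerivAt (Fh X₀ c)
      ((Fh X₀ c Y * (-1 / (4 * c))) • (2 • (innerSL ℝ (Y - X₀)))) Y := by
  have hq : HasFDerivAt (fun Z : EuclideanSpace ℝ (Fin 2) => ‖Z - X₀‖ ^ 2)
      (2 • (innerSL ℝ (Y - X₀))) Y := by
    simpa using ((hasFDerivAt_id Y).sub_const X₀).norm_sq
  have hg : HasDerivAt (fun s : ℝ => (1 / Real.sqrt (4 * Real.pi * c)) * Real.exp (-s / (4 * c)))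
      ((1 / Real.sqrt (4 * Real.pi * c)) * Real.exp (-‖Y - X₀‖ ^ 2 / (4 * c)) * (-1 / (4 * c)))
      (‖Y - X₀‖ ^ 2) := by
    have h1 : HasDerivAt (fun s : ℝ => -s / (4 * c)) (-1 / (4 * c)) (‖Y - X₀‖ ^ 2) := by
      simpa using (hasDerivAt_id (‖Y - X₀‖ ^ 2)).neg.div_const (4 * c)
    simpa [mul_assoc] using (h1.exp.const_mul (1 / Real.sqrt (4 * Real.pi * c)))
  have h := hg.comp_hasFDerivAt Y hq
  unfold Fh
  simpa [Function.comp_def] using h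

lemma Fh_fderiv (X₀ : EuclideanSpace ℝ (Fin 2)) (c : ℝ) (Y : EuclideanSpace ℝ (Fin 2)) :
    fderiv ℝ (Fh X₀ c) Y = (Fh X₀ c Y * (-1 / (4 * c))) • (2 • (innerSL ℝ (Y - X₀))) :=
  (Fh_hasFDerivAt X₀ c Y).fderiv

lemma Fh_fderiv_apply (X₀ : EuclideanSpace ℝ (Fin 2)) (c : ℝ)
    (Y v : EuclideanSpace ℝ (Fin 2)) :
    fderiv ℝ (Fh X₀ c) Y v = Fh X₀ c Y * (-1 / (4 * c)) * (2 * ⟪Y - X₀, v⟫) := by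
  rw [Fh_fderiv]
  simp only [ContinuousLinearMap.smul_apply, innerSL_apply_apply, smul_eq_mul]
  ring

lemma Fh_contDiff (X₀ : EuclideanSpace ℝ (Fin 2)) (c : ℝ) : ContDiff ℝ 2 (Fh X₀ c) := by
  apply ContDiff.mul contDiff_const
  exact Real.contDiff_exp.comp
    ((((contDiff_id.sub contDiff_const).norm_sq ℝ).neg).div_const _)

lemma Fh_second (X₀ : EuclideanSpace ℝ (Fin 2)) (c : ℝ)
    (X v w : EuclideanSpace ℝ (Fin 2)) :
    fderiv ℝ (fun Y => fderiv ℝ (Fh X₀ c) Y) X w v =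
      Fh X₀ c X * ((-1 / (4 * c)) * (2 * ⟪v, w⟫)) +
        ((-1 / (4 * c)) * (2 * ⟪X - X₀, v⟫)) *
          (Fh X₀ c X * (-1 / (4 * c)) * (2 * ⟪X - X₀, w⟫)) := by
  have hdiff : DifferentiableAt ℝ (fun Y => fderiv ℝ (Fh X₀ c) Y) X :=
    (((Fh_contDiff X₀ c).fderiv_right (m := 1) (by norm_num)).differentiable one_ne_zero) X
  have key : fderiv ℝ (fun Y => fderiv ℝ (Fh X₀ c) Y) X w v =
      fderiv ℝ (fun Y => fderiv ℝ (Fh X₀ c) Y v) X w := by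
    have h := fderiv_clm_apply (c := fun Y => fderiv ℝ (Fh X₀ c) Y) (u := fun _ => v)
      hdiff (differentiableAt_const v)
    rw [h]
    simp
  rw [key]
  have hinner : HasFDerivAt (fun Z : EuclideanSpace ℝ (Fin 2) => (⟪Z - X₀, v⟫ : ℝ))
      (innerSL ℝ v) X := by
    have h : HasFDerivAt (fun Z : EuclideanSpace ℝ (Fin 2) => (innerSL ℝ v) (Z - X₀))
        (innerSL ℝ v) X := by
      simpa [Function.comp_def] using ((innerSL ℝ v).hasFDerivAt.comp X ((hasFDerivAt_id X).sub_const X₀))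
    convert h using 2 with Z
    exact real_inner_comm _ _
  have hgv : HasFDerivAt (fun Y : EuclideanSpace ℝ (Fin 2) =>
      (-1 / (4 * c)) * (2 * ⟪Y - X₀, v⟫))
      ((-1 / (4 * c)) • ((2 : ℝ) • innerSL ℝ v)) X := by
    simpa [smul_smul] using ((hinner.const_mul (2 : ℝ)).const_mul (-1 / (4 * c)))
  have hprod := (Fh_hasFDerivAt X₀ c X).mul hgv
  have hφ : (fun Y => fderiv ℝ (Fh X₀ c) Y v) =
      fun Y => Fh X₀ c Y * ((-1 / (4 * c)) * (2 * ⟪Y - X₀, v⟫)) := by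
    funext Y
    rw [Fh_fderiv_apply]
    ring
  rw [hφ, HasFDerivAt.fderiv (f := fun Y => Fh X₀ c Y * ((-1 / (4 * c)) * (2 * ⟪Y - X₀, v⟫))) hprod]
  simp only [ContinuousLinearMap.add_apply, ContinuousLinearMap.smul_apply, innerSL_apply_apply,
    smul_eq_mul]
  ring

/-- The backward heat kernel on `ℝ²` with time-dependent conductivity satisfies
`ρ_t + k'(t)(Dρ·a)²/ρ + k'(t)((I − a⊗a) : D²ρ) = 0` for every unit vector `a`,
where `(I − a⊗a) : D²ρ = Δρ − D²ρ(a,a)`. -/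
theorem stmt_6
    (X₀ : EuclideanSpace ℝ (Fin 2)) (K : ℝ)
    (k : ℝ → ℝ) (hk : ContDiff ℝ 1 k)
    (ρ : EuclideanSpace ℝ (Fin 2) → ℝ → ℝ)
    (hρ : ∀ (X : EuclideanSpace ℝ (Fin 2)) (t : ℝ),
      ρ X t = (1 / Real.sqrt (4 * Real.pi * (K - k t))) *
        Real.exp (-‖X - X₀‖ ^ 2 / (4 * (K - k t))))
    (a : EuclideanSpace ℝ (Fin 2)) (ha : ‖a‖ = 1)
    (X : EuclideanSpace ℝ (Fin 2)) (t : ℝ) (htK : k t < K) :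
    deriv (fun s => ρ X s) t +
      deriv k t * (fderiv ℝ (fun Z => ρ Z t) X a) ^ 2 / ρ X t +
      deriv k t *
        ((∑ i : Fin 2,
            fderiv ℝ (fun Y => fderiv ℝ (fun Z => ρ Z t) Y) X (EuclideanSpace.single i 1)
              (EuclideanSpace.single i 1)) -
          fderiv ℝ (fun Y => fderiv ℝ (fun Z => ρ Z t) Y) X a a) = 0 := by
  have hπ := Real.pi_pos
  have hc : 0 < K - k t := sub_pos.2 htK
  have h4c : (0:ℝ) < 4 * Real.pi * (K - k t) := by positivity
  have hS : 0 < Real.sqrt (4 * Real.pi * (K - k t)) := Real.sqrt_pos.2 h4c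
  have hS2 : Real.sqrt (4 * Real.pi * (K - k t)) ^ 2 = 4 * Real.pi * (K - k t) :=
    Real.sq_sqrt h4c.le
  -- time derivative
  have hkt : HasDerivAt k (deriv k t) t := (hk.differentiable one_ne_zero t).hasDerivAt
  have h1 : HasDerivAt (fun s => K - k s) (-(deriv k t)) t := hkt.const_sub K
  have h2 : HasDerivAt (fun s => 4 * Real.pi * (K - k s)) (4 * Real.pi * (-(deriv k t))) t :=
    h1.const_mul _
  have h3 : HasDerivAt (fun s => Real.sqrt (4 * Real.pi * (K - k s)))
      ((1 / (2 * Real.sqrt (4 * Real.pi * (K - k t)))) * (4 * Real.pi * (-(deriv k t)))) t := by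
    simpa [Function.comp_def] using (Real.hasDerivAt_sqrt (ne_of_gt h4c)).comp t h2
  have h4 : HasDerivAt (fun s => 1 / Real.sqrt (4 * Real.pi * (K - k s)))
      (-((1 / (2 * Real.sqrt (4 * Real.pi * (K - k t)))) * (4 * Real.pi * (-(deriv k t)))) /
        Real.sqrt (4 * Real.pi * (K - k t)) ^ 2) t := by
    simpa [one_div, Pi.inv_def] using h3.inv (ne_of_gt hS)
  have hden : HasDerivAt (fun s => 4 * (K - k s)) (4 * (-(deriv k t))) t := h1.const_mul 4
  have h5 : HasDerivAt (fun s => -‖X - X₀‖ ^ 2 / (4 * (K - k s)))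
      ((0 * (4 * (K - k t)) - -‖X - X₀‖ ^ 2 * (4 * (-(deriv k t)))) / (4 * (K - k t)) ^ 2) t :=
    (hasDerivAt_const t (-‖X - X₀‖ ^ 2)).div hden (by positivity)
  have hT : HasDerivAt (fun s => ρ X s)
      ((-((1 / (2 * Real.sqrt (4 * Real.pi * (K - k t)))) * (4 * Real.pi * (-(deriv k t)))) /
          Real.sqrt (4 * Real.pi * (K - k t)) ^ 2) * Real.exp (-‖X - X₀‖ ^ 2 / (4 * (K - k t)))
        + (1 / Real.sqrt (4 * Real.pi * (K - k t))) *
          (Real.exp (-‖X - X₀‖ ^ 2 / (4 * (K - k t))) *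
            ((0 * (4 * (K - k t)) - -‖X - X₀‖ ^ 2 * (4 * (-(deriv k t)))) /
              (4 * (K - k t)) ^ 2))) t := by
    have hfunt : (fun s => ρ X s) = fun s =>
        (1 / Real.sqrt (4 * Real.pi * (K - k s))) * Real.exp (-‖X - X₀‖ ^ 2 / (4 * (K - k s))) :=
      funext fun s => hρ X s
    rw [hfunt]
    exact h4.mul h5.exp
  -- rewrite spatial function
  have hfun : (fun Z => ρ Z t) = Fh X₀ (K - k t) := funext fun Z => hρ Z t
  rw [hT.deriv, hfun, hρ X t, Fin.sum_univ_two, Fh_second, Fh_second, Fh_second,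
    Fh_fderiv_apply]
  have hiaa : (⟪a, a⟫ : ℝ) = 1 := by
    rw [real_inner_self_eq_norm_sq, ha]; norm_num
  have hFX : Fh X₀ (K - k t) X =
      (1 / Real.sqrt (4 * Real.pi * (K - k t))) *
        Real.exp (-‖X - X₀‖ ^ 2 / (4 * (K - k t))) := rfl
  have hr : ((X - X₀) 0) ^ 2 + ((X - X₀) 1) ^ 2 = ‖X - X₀‖ ^ 2 := by
    rw [EuclideanSpace.norm_eq, Real.sq_sqrt (by positivity)]
    simp [Fin.sum_univ_two, Real.norm_eq_abs, sq_abs]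
  have hi0 : (⟪X - X₀, EuclideanSpace.single (0 : Fin 2) (1:ℝ)⟫ : ℝ) = (X - X₀) 0 := by
    simp [EuclideanSpace.inner_single_right]
  have hi1 : (⟪X - X₀, EuclideanSpace.single (1 : Fin 2) (1:ℝ)⟫ : ℝ) = (X - X₀) 1 := by
    simp [EuclideanSpace.inner_single_right]
  have hi00 : (⟪EuclideanSpace.single (0 : Fin 2) (1:ℝ), EuclideanSpace.single (0 : Fin 2) (1:ℝ)⟫ : ℝ) = 1 := by
    simp [EuclideanSpace.inner_single_right]
  have hi11 : (⟪EuclideanSpace.single (1 : Fin 2) (1:ℝ), EuclideanSpace.single (1 : Fin 2) (1:ℝ)⟫ : ℝ) = 1 := by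
    simp [EuclideanSpace.inner_single_right]
  rw [hiaa, hFX, hi0, hi1, hi00, hi11, ← hr]
  set S := Real.sqrt (4 * Real.pi * (K - k t)) with hSdef
  have hπ' : 4 * Real.pi = S ^ 2 / (K - k t) := by
    rw [hS2, mul_div_assoc, div_self hc.ne', mul_one]
  rw [hπ']
  have hE : Real.exp (-(((X - X₀) 0) ^ 2 + ((X - X₀) 1) ^ 2) / (4 * (K - k t))) ≠ 0 :=
    Real.exp_ne_zero _
  field_simp
  ring
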